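/- Let R, A1, A2, B be commutative Noetherian rings fitting into a Cartesian (pullback) square with maps ψ1: R → A1, ψ2: R → A2 and surjections φ1: A1 → B, φ2: A2 → B, such that ker(φ1) = (a1) and ker(φ2) = (a2) are principal ideals. Then the natural map A1 ⊗_R A2 → B is an isomorphism. -/
import Mathlib


/-- **Lemma (Cartesian square of Noetherian rings).**
Let `R, A1, A2, B` be commutative Noetherian rings fitting into a Cartesian square
with maps `ψ1 : R → A1`, `ψ2 : R → A2` (the algebra maps) and surjections
`φ1 : A1 → B`, `φ2 : A2 → B` whose kernels are principal.  Then the natural map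
`A1 ⊗_R A2 → B` is an isomorphism. -/
theorem tensor_product_of_cartesian_square
    (R A1 A2 B : Type*) [CommRing R] [CommRing A1] [CommRing A2] [CommRing B]
    [IsNoetherianRing R] [IsNoetherianRing A1] [IsNoetherianRing A2] [IsNoetherianRing B]
    [Algebra R A1] [Algebra R A2] [Algebra R B]
    (φ1 : A1 →ₐ[R] B) (φ2 : A2 →ₐ[R] B)
    (hφ1 : Function.Surjective φ1) (hφ2 : Function.Surjective φ2)
    (a1 : A1) (a2 : A2)
    (hker1 : RingHom.ker (φ1 : A1 →+* B) = Ideal.span {a1})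
    (hker2 : RingHom.ker (φ2 : A2 →+* B) = Ideal.span {a2})
    -- the square is Cartesian: `R` is the fiber product of `A1` and `A2` over `B`
    (hpullback : ∀ (x : A1) (y : A2), φ1 x = φ2 y →
      ∃! r : R, algebraMap R A1 r = x ∧ algebraMap R A2 r = y) :
    Function.Bijective (Algebra.TensorProduct.productMap φ1 φ2) := by
  -- `ψ2 = algebraMap R A2` is surjective
  have hψ2 : Function.Surjective (algebraMap R A2) := by
    intro y
    obtain ⟨x, hx⟩ := hφ1 (φ2 y)
    obtain ⟨r, ⟨_, hr2⟩, _⟩ := hpullback x y hx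
    exact ⟨r, hr2⟩
  -- every element of the tensor product is of the form `x ⊗ 1`
  have hrep : ∀ t : TensorProduct R A1 A2, ∃ x : A1, t = x ⊗ₜ[R] (1 : A2) := by
    intro t
    induction t using TensorProduct.induction_on with
    | zero => exact ⟨0, by simp⟩
    | tmul x y =>
        obtain ⟨r, hr⟩ := hψ2 y
        refine ⟨r • x, ?_⟩
        rw [TensorProduct.smul_tmul, ← hr, Algebra.algebraMap_eq_smul_one]
    | add s t hs ht =>
        obtain ⟨x, hx⟩ := hs
        obtain ⟨x', hx'⟩ := ht
        exact ⟨x + x', by rw [hx, hx', TensorProduct.add_tmul]⟩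
  constructor
  · rw [injective_iff_map_eq_zero]
    intro t ht
    obtain ⟨x, rfl⟩ := hrep t
    simp only [Algebra.TensorProduct.productMap_apply_tmul, map_one, mul_one] at ht
    -- x ∈ ker φ1 = span {a1}
    have hx : x ∈ Ideal.span {a1} := hker1 ▸ RingHom.mem_ker.mpr ht
    obtain ⟨c, rfl⟩ := Ideal.mem_span_singleton'.mp hx
    -- lift a1 to an element of ker ψ2
    have ha1 : φ1 a1 = φ2 0 := by
      have : a1 ∈ RingHom.ker (φ1 : A1 →+* B) := hker1 ▸ Ideal.mem_span_singleton_self a1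
      simpa using this
    obtain ⟨r, ⟨hr1, hr2⟩, _⟩ := hpullback a1 0 ha1
    calc (c * a1) ⊗ₜ[R] (1 : A2) = (r • c) ⊗ₜ[R] (1 : A2) := by
            rw [Algebra.smul_def, hr1, mul_comm]
      _ = c ⊗ₜ[R] (r • (1 : A2)) := (TensorProduct.smul_tmul r c 1)
      _ = 0 := by rw [Algebra.smul_def, hr2, zero_mul, TensorProduct.tmul_zero]
  · intro b
    obtain ⟨x, hx⟩ := hφ1 b
    exact ⟨x ⊗ₜ 1, by simp [hx]⟩
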